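/- Let X̃ be a smooth compact manifold with metric d and let Φ, Φ̂ ∈ Diff¹(X̃) be topologically conjugate by a homeomorphism g : X̃ → X̃, i.e. g ∘ Φ = Φ̂ ∘ g. Let (U, d_U) be a separable metric space, let h, ĥ : X̃ → U be continuous, and let d_{P,U} be a metric metrizing the weak topology on P(U). Let ξ be an ergodic Borel probability measure for Φ, let ξ₀ be a Borel probability measure absolutely continuous with respect to ξ, and suppose g⁻¹ is nonsingular with respect to ξ. Then limsup_{T→∞} d_{P,U}( (1/T) Σ_{t=0}^{T-1} h_*Φ^t_*ξ₀, (1/T) Σ_{t=0}^{T-1} ĥ_*Φ̂^t_*ξ₀ ) ≤ d_{P,U}(h_*ξ, ĥ_*ξ) + d_{P,U}(ĥ_*ξ, ĥ_*g_*ξ). -/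

import Mathlib

set_option maxHeartbeats 1000000
set_option synthInstance.maxHeartbeats 400000

open MeasureTheory Filter Topology ENNReal

noncomputable section

/-- Pushforward of a probability measure under a measurable map. -/
def pushPM {α β : Type*} [MeasurableSpace α] [MeasurableSpace β]
    (f : α → β) (hf : Measurable f) (ν : ProbabilityMeasure α) : ProbabilityMeasure β :=
  ⟨(ν : Measure α).map f, Measure.isProbabilityMeasure_map hf.aemeasurable⟩

/-- Cesàro average `(1/(T+1)) ∑_{t=0}^{T} s t` of a sequence of probability measures. -/
def avgPM {α : Type*} [MeasurableSpace α] (s : ℕ → ProbabilityMeasure α) (T : ℕ) :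
    ProbabilityMeasure α :=
  ⟨((T + 1 : ℕ) : ℝ≥0∞)⁻¹ • ∑ t ∈ Finset.range (T + 1), (s t : Measure α), by
    constructor
    simp only [Measure.smul_apply, Measure.finsetSum_apply, measure_univ, Finset.sum_const,
      Finset.card_range, nsmul_eq_mul, mul_one, smul_eq_mul]
    rw [ENNReal.inv_mul_cancel] <;> simp⟩

/-- `ξ` is an invariant measure of `f` and every invariant Borel set has measure `0` or `1`. -/
def IsErgodicM {α : Type*} [MeasurableSpace α] (f : α → α) (μ : Measure α) : Prop :=
  μ.map f = μ ∧ ∀ A : Set α, MeasurableSet A → f ⁻¹' A = A → μ A = 0 ∨ μ A = 1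

/-- L² mean-ergodic pairing: Cesàro averages of correlations of an ergodic system converge
to the product of the means. -/
lemma pairingL2 {α : Type*} [MeasurableSpace α] (μ : Measure α) [IsProbabilityMeasure μ]
    {Φ : α → α} (herg : Ergodic Φ μ) {f w : α → ℝ}
    (hf2 : MemLp f 2 μ) (hw2 : MemLp w 2 μ) :
    Tendsto (fun N : ℕ => (N : ℝ)⁻¹ * ∑ t ∈ Finset.range N, ∫ x, f (Φ^[t] x) * w x ∂μ)
      atTop (𝓝 ((∫ x, f x ∂μ) * ∫ x, w x ∂μ)) := by
  have hmp := herg.toMeasurePreserving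
  set Li : Lp ℝ 2 μ →ₗᵢ[ℝ] Lp ℝ 2 μ := Lp.compMeasurePreservingₗᵢ ℝ Φ hmp with hLi
  set U : Lp ℝ 2 μ →L[ℝ] Lp ℝ 2 μ := Li.toContinuousLinearMap with hU
  have hUapp : ∀ ψ : Lp ℝ 2 μ, ⇑(U ψ) =ᵐ[μ] ⇑ψ ∘ Φ := fun ψ =>
    Lp.coeFn_compMeasurePreserving ψ hmp
  set φ : Lp ℝ 2 μ := hf2.toLp f with hφ
  set w' : Lp ℝ 2 μ := hw2.toLp w with hw'
  have hiter : ∀ t : ℕ, ⇑((⇑U)^[t] φ) =ᵐ[μ] f ∘ Φ^[t] := by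
    intro t
    induction t with
    | zero => simpa using hf2.coeFn_toLp
    | succ t ih =>
      rw [Function.iterate_succ_apply']
      refine (hUapp _).trans ?_
      have h2 := hmp.quasiMeasurePreserving.ae_eq_comp ih
      rwa [Function.comp_assoc, ← Function.iterate_succ] at h2
  -- the von Neumann limit
  have hnorm : ‖U‖ ≤ 1 := Li.norm_toContinuousLinearMap_le
  have hconv := U.tendsto_birkhoffAverage_orthogonalProjection hnorm φ
  set L : Lp ℝ 2 μ := ((U.eqLocus (1 : Lp ℝ 2 μ →L[ℝ] Lp ℝ 2 μ)).orthogonalProjectionOnto φ : Lp ℝ 2 μ) with hL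
  -- L is a fixed point, hence a.e. constant
  have hfix : U L = L := by
    have := ((U.eqLocus (1 : Lp ℝ 2 μ →L[ℝ] Lp ℝ 2 μ)).orthogonalProjectionOnto φ).2
    rw [LinearMap.mem_eqLocus] at this
    exact this
  have hLc : ∃ c : ℝ, ⇑L =ᵐ[μ] fun _ => c := by
    have h1 : ⇑L ∘ Φ =ᵐ[μ] ⇑L := (hUapp L).symm.trans (by rw [hfix])
    exact herg.ae_eq_const_of_ae_eq_comp₀
      (Lp.aestronglyMeasurable L).aemeasurable.nullMeasurable h1
  obtain ⟨c, hc⟩ := hLc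
  -- the constant one function is a fixed point
  have hone : MemLp (fun _ : α => (1 : ℝ)) 2 μ := memLp_const 1
  set one : Lp ℝ 2 μ := hone.toLp _ with honedef
  have honemem : one ∈ U.eqLocus (1 : Lp ℝ 2 μ →L[ℝ] Lp ℝ 2 μ) := by
    have : ⇑(U one) =ᵐ[μ] ⇑one := by
      refine (hUapp one).trans ?_
      refine (hmp.quasiMeasurePreserving.ae_eq_comp hone.coeFn_toLp).trans ?_
      exact hone.coeFn_toLp.symm
    rw [LinearMap.mem_eqLocus]
    simpa using Lp.ext (p := (2 : ℝ≥0∞)) this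
  -- inner products: ⟪ψ, w'⟫ etc
  have hinner : ∀ (ψ : Lp ℝ 2 μ) (g : α → ℝ), ⇑ψ =ᵐ[μ] g →
      (inner ℝ ψ w' : ℝ) = ∫ x, g x * w x ∂μ := by
    intro ψ g hg
    rw [MeasureTheory.L2.inner_def]
    refine integral_congr_ae ?_
    filter_upwards [hg, hw2.coeFn_toLp] with x h1 h2
    simp [hw', h1, h2, RCLike.inner_apply, mul_comm]
  -- c = ∫ f
  have hc_eq : c = ∫ x, f x ∂μ := by
    have horth := Submodule.starProjection_inner_eq_zero (K := U.eqLocus (1 : Lp ℝ 2 μ →L[ℝ] Lp ℝ 2 μ)) φ one honemem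
    have h1 : (inner ℝ (φ - L) one : ℝ) = 0 := horth
    have h2 : (inner ℝ φ one : ℝ) = (inner ℝ L one : ℝ) := by
      rw [inner_sub_left] at h1
      exact sub_eq_zero.mp h1
    have h3 : (inner ℝ φ one : ℝ) = ∫ x, f x ∂μ := by
      rw [MeasureTheory.L2.inner_def]
      rw [show (∫ x, f x ∂μ) = ∫ x, f x * 1 ∂μ by simp]
      refine integral_congr_ae ?_
      filter_upwards [hf2.coeFn_toLp, hone.coeFn_toLp] with x h1 h2
      simp [hφ, honedef, h1, h2, RCLike.inner_apply]
    have h4 : (inner ℝ L one : ℝ) = c := by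
      rw [MeasureTheory.L2.inner_def]
      have : (∫ x, (inner ℝ (L x) (one x) : ℝ) ∂μ) = ∫ _, c ∂μ := by
        refine integral_congr_ae ?_
        filter_upwards [hc, hone.coeFn_toLp] with x h1 h2
        simp [honedef, h1, h2, RCLike.inner_apply]
      rw [this]
      simp
    rw [← h3, h2, h4]
  -- pair the convergence with w'
  have hpair : Tendsto (fun N : ℕ => (inner ℝ (birkhoffAverage ℝ (⇑U) _root_.id N φ) w' : ℝ))
      atTop (𝓝 (inner ℝ L w' : ℝ)) := by
    exact ((continuous_id.inner continuous_const).tendsto L).comp hconv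
  have hLw : (inner ℝ L w' : ℝ) = (∫ x, f x ∂μ) * ∫ x, w x ∂μ := by
    rw [hinner L (fun _ => c) hc, ← hc_eq]
    rw [integral_const_mul]
  have hAN : ∀ N : ℕ, (inner ℝ (birkhoffAverage ℝ (⇑U) _root_.id N φ) w' : ℝ)
      = (N : ℝ)⁻¹ * ∑ t ∈ Finset.range N, ∫ x, f (Φ^[t] x) * w x ∂μ := by
    intro N
    rw [birkhoffAverage, birkhoffSum]
    rw [inner_smul_left, sum_inner]
    simp only [_root_.id]
    rw [RCLike.conj_to_real]
    congr 1
    refine Finset.sum_congr rfl fun t _ => ?_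
    exact hinner _ _ (hiter t)
  rw [← hLw]
  exact hpair.congr (fun N => hAN N)

/-- Cesàro averages of observables pushed forward from an absolutely continuous initial
condition of an ergodic system converge to the space average. -/
lemma keyCesaro {α : Type*} [MeasurableSpace α] (μ ν : Measure α)
    [IsProbabilityMeasure μ] [IsProbabilityMeasure ν]
    {Φ : α → α} (herg : Ergodic Φ μ) (hν : ν ≪ μ) {f : α → ℝ} (hfm : Measurable f)
    {C : ℝ} (hC : ∀ x, |f x| ≤ C) :
    Tendsto (fun N : ℕ => (N : ℝ)⁻¹ * ∑ t ∈ Finset.range N, ∫ x, f (Φ^[t] x) ∂ν)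
      atTop (𝓝 (∫ x, f x ∂μ)) := by
  have hC0 : 0 ≤ C := le_trans (abs_nonneg _) (hC (Nonempty.some (by
    by_contra hne
    rw [not_nonempty_iff] at hne
    have : μ Set.univ = 0 := by simp [Set.univ_eq_empty_iff.2 hne]
    simp [measure_univ] at this)))
  set ρ : α → ℝ := fun x => (ν.rnDeriv μ x).toReal with hρdef
  have hρm : Measurable ρ := (Measure.measurable_rnDeriv ν μ).ennreal_toReal
  have hρnn : ∀ x, 0 ≤ ρ x := fun x => ENNReal.toReal_nonneg
  have hρint : Integrable ρ μ := Measure.integrable_toReal_rnDeriv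
  have hρ1 : ∫ x, ρ x ∂μ = 1 := by
    rw [hρdef]
    rw [Measure.integral_toReal_rnDeriv hν]
    simp
  -- conversion of the ν-integrals
  have hconv : ∀ t : ℕ, ∫ x, f (Φ^[t] x) ∂ν = ∫ x, f (Φ^[t] x) * ρ x ∂μ := by
    intro t
    rw [← MeasureTheory.integral_rnDeriv_smul hν (f := fun x => f (Φ^[t] x))]
    refine integral_congr_ae (Eventually.of_forall fun x => ?_)
    simp [mul_comm, smul_eq_mul, hρdef]
  -- truncations
  set ρn : ℕ → α → ℝ := fun n x => min (ρ x) n with hρndef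
  have hρnm : ∀ n, Measurable (ρn n) := fun n => hρm.min measurable_const
  have hρn2 : ∀ n, MemLp (ρn n) 2 μ := fun n =>
    MemLp.of_bound (hρnm n).aestronglyMeasurable n
      (Eventually.of_forall fun x => by
        rw [Real.norm_eq_abs, abs_of_nonneg (le_min (hρnn x) n.cast_nonneg)]
        exact min_le_right _ _)
  have hρnle : ∀ n x, ρn n x ≤ ρ x := fun n x => min_le_left _ _
  have hρnnn : ∀ n x, 0 ≤ ρn n x := fun n x => le_min (hρnn x) n.cast_nonneg
  have hρnint : ∀ n, Integrable (ρn n) μ := fun n => (hρn2 n).integrable (by norm_num)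
  -- In → 1
  have hIn : Tendsto (fun n : ℕ => ∫ x, ρn n x ∂μ) atTop (𝓝 1) := by
    rw [← hρ1]
    refine tendsto_integral_of_dominated_convergence ρ
      (fun n => (hρnm n).aestronglyMeasurable) hρint
      (fun n => Eventually.of_forall fun x => by
        rw [Real.norm_eq_abs, abs_of_nonneg (hρnnn n x)]; exact hρnle n x)
      (Eventually.of_forall fun x => ?_)
    refine tendsto_atTop_of_eventually_const (i₀ := ⌈ρ x⌉₊) fun n hn => ?_
    exact min_eq_left ((Nat.le_ceil (ρ x)).trans (Nat.cast_le.mpr hn))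
  have hf2 : MemLp f 2 μ :=
    MemLp.of_bound hfm.aestronglyMeasurable C
      (Eventually.of_forall fun x => by rw [Real.norm_eq_abs]; exact hC x)
  -- integrability of products
  have hprod : ∀ (t : ℕ) (g : α → ℝ), Measurable g → Integrable g μ →
      Integrable (fun x => f (Φ^[t] x) * g x) μ := by
    intro t g hgm hgint
    exact hgint.bdd_mul ((hfm.comp (herg.measurable.iterate t)).aestronglyMeasurable)
      (Eventually.of_forall fun x => by rw [Real.norm_eq_abs]; exact hC _)
  -- per-term error bound
  have hterm : ∀ (n t : ℕ),
      |∫ x, f (Φ^[t] x) * ρ x ∂μ - ∫ x, f (Φ^[t] x) * ρn n x ∂μ|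
        ≤ C * (1 - ∫ x, ρn n x ∂μ) := by
    intro n t
    rw [← integral_sub (hprod t ρ hρm hρint) (hprod t (ρn n) (hρnm n) (hρnint n))]
    have h1 : ∀ x, f (Φ^[t] x) * ρ x - f (Φ^[t] x) * ρn n x = f (Φ^[t] x) * (ρ x - ρn n x) :=
      fun x => by ring
    simp only [h1]
    calc |∫ x, f (Φ^[t] x) * (ρ x - ρn n x) ∂μ|
        ≤ ∫ x, |f (Φ^[t] x) * (ρ x - ρn n x)| ∂μ := by
          have := norm_integral_le_integral_norm (fun x => f (Φ^[t] x) * (ρ x - ρn n x)) (μ := μ)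
          simp only [Real.norm_eq_abs] at this
          exact this
      _ ≤ ∫ x, C * (ρ x - ρn n x) ∂μ := by
          refine integral_mono (((hprod t ρ hρm hρint).sub
            (hprod t (ρn n) (hρnm n) (hρnint n))).congr ?_ |>.abs) ?_ fun x => ?_
          · exact Eventually.of_forall fun x => by simp [h1]
          · exact (hρint.sub (hρnint n)).const_mul C
          · rw [abs_mul, abs_of_nonneg (sub_nonneg.mpr (hρnle n x))]
            exact mul_le_mul_of_nonneg_right (hC _) (sub_nonneg.mpr (hρnle n x))
      _ = C * (1 - ∫ x, ρn n x ∂μ) := by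
          rw [integral_const_mul, integral_sub hρint (hρnint n), hρ1]
  -- average error bound
  have havg : ∀ (n N : ℕ),
      |(N : ℝ)⁻¹ * ∑ t ∈ Finset.range N, ∫ x, f (Φ^[t] x) * ρ x ∂μ
        - (N : ℝ)⁻¹ * ∑ t ∈ Finset.range N, ∫ x, f (Φ^[t] x) * ρn n x ∂μ|
        ≤ C * (1 - ∫ x, ρn n x ∂μ) := by
    intro n N
    rcases Nat.eq_zero_or_pos N with hN | hN
    · subst hN
      simp only [Finset.range_zero, Finset.sum_empty, mul_zero, sub_zero, abs_zero]
      have := hterm n 0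
      nlinarith [abs_nonneg (∫ x, f (Φ^[0] x) * ρ x ∂μ - ∫ x, f (Φ^[0] x) * ρn n x ∂μ)]
    · rw [← mul_sub, ← Finset.sum_sub_distrib, abs_mul, abs_inv, Nat.abs_cast]
      have h2 : |∑ t ∈ Finset.range N, (∫ x, f (Φ^[t] x) * ρ x ∂μ
          - ∫ x, f (Φ^[t] x) * ρn n x ∂μ)| ≤ N * (C * (1 - ∫ x, ρn n x ∂μ)) := by
        refine (Finset.abs_sum_le_sum_abs _ _).trans ?_
        calc ∑ t ∈ Finset.range N, |∫ x, f (Φ^[t] x) * ρ x ∂μ - ∫ x, f (Φ^[t] x) * ρn n x ∂μ|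
            ≤ ∑ _t ∈ Finset.range N, C * (1 - ∫ x, ρn n x ∂μ) :=
              Finset.sum_le_sum fun t _ => hterm n t
          _ = N * (C * (1 - ∫ x, ρn n x ∂μ)) := by simp [Finset.sum_const, mul_comm]
      calc (N : ℝ)⁻¹ * |∑ t ∈ Finset.range N, (∫ x, f (Φ^[t] x) * ρ x ∂μ
              - ∫ x, f (Φ^[t] x) * ρn n x ∂μ)|
          ≤ (N : ℝ)⁻¹ * (N * (C * (1 - ∫ x, ρn n x ∂μ))) := by
            refine mul_le_mul_of_nonneg_left h2 (by positivity)
        _ = C * (1 - ∫ x, ρn n x ∂μ) := by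
            field_simp
  -- final ε-argument
  rw [Metric.tendsto_atTop]
  intro ε hε
  have hεpos : 0 < ε / 3 := by linarith
  -- choose n
  have hInev : ∀ᶠ n in atTop, C * (1 - ∫ x, ρn n x ∂μ) < ε / 3 := by
    have : Tendsto (fun n : ℕ => C * (1 - ∫ x, ρn n x ∂μ)) atTop (𝓝 (C * (1 - 1))) :=
      (tendsto_const_nhds.sub hIn).const_mul C
    simp only [sub_self, mul_zero] at this
    exact this.eventually (Filter.Tendsto.eventually_lt_const hεpos tendsto_id |>.mono fun _ h => h) |>.mono
      fun _ h => h
  obtain ⟨n, hn⟩ := hInev.exists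
  have hpair := pairingL2 μ herg hf2 (hρn2 n)
  have hInle : ∫ x, ρn n x ∂μ ≤ 1 := by
    rw [← hρ1]
    exact integral_mono (hρnint n) hρint (hρnle n)
  have hδnn : 0 ≤ C * (1 - ∫ x, ρn n x ∂μ) := by
    have := sub_nonneg.mpr hInle
    positivity
  have hfC : |∫ x, f x ∂μ| ≤ C := by
    have := norm_integral_le_of_norm_le_const (μ := μ) (f := f) (C := C)
      (Eventually.of_forall fun x => by rw [Real.norm_eq_abs]; exact hC x)
    simpa [Real.norm_eq_abs] using this
  obtain ⟨N₀, hN₀⟩ := Metric.tendsto_atTop.mp hpair (ε / 3) hεpos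
  refine ⟨N₀, fun N hN => ?_⟩
  have h2 := hN₀ N hN
  rw [Real.dist_eq] at h2 ⊢
  simp only [hconv]
  have h1 := havg n N
  have h3 : |(∫ x, f x ∂μ) * (∫ x, ρn n x ∂μ) - ∫ x, f x ∂μ| ≤ C * (1 - ∫ x, ρn n x ∂μ) := by
    have : (∫ x, f x ∂μ) * (∫ x, ρn n x ∂μ) - ∫ x, f x ∂μ
        = -((∫ x, f x ∂μ) * (1 - ∫ x, ρn n x ∂μ)) := by ring
    rw [this, abs_neg, abs_mul, abs_of_nonneg (sub_nonneg.mpr hInle)]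
    exact mul_le_mul_of_nonneg_right hfC (sub_nonneg.mpr hInle)
  set A := (N : ℝ)⁻¹ * ∑ t ∈ Finset.range N, ∫ x, f (Φ^[t] x) * ρ x ∂μ
  set B := (N : ℝ)⁻¹ * ∑ t ∈ Finset.range N, ∫ x, f (Φ^[t] x) * ρn n x ∂μ
  set l := ∫ x, f x ∂μ
  have e1 : |A - l| ≤ |A - B| + |B - l * (∫ x, ρn n x ∂μ)| + |l * (∫ x, ρn n x ∂μ) - l| := by
    calc |A - l| ≤ |A - B| + |B - l| := abs_sub_le A B l
      _ ≤ |A - B| + (|B - l * (∫ x, ρn n x ∂μ)| + |l * (∫ x, ρn n x ∂μ) - l|) :=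
          add_le_add_right (abs_sub_le _ _ _) _
      _ = _ := by ring
  have := h1.trans_lt hn
  have := h3.trans_lt hn
  linarith

lemma isErgodicM_ergodic {α : Type*} [MeasurableSpace α] {f : α → α} {μ : Measure α}
    [IsProbabilityMeasure μ] (hfm : Measurable f) (h : IsErgodicM f μ) : Ergodic f μ := by
  refine ⟨⟨hfm, h.1⟩, ⟨fun s hs hfs => ?_⟩⟩
  rw [Filter.eventuallyConst_set']
  rcases h.2 s hs hfs with h0 | h1
  · exact Or.inl (ae_eq_empty.mpr h0)
  · refine Or.inr (ae_eq_univ.mpr ?_)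
    rw [measure_compl hs (measure_ne_top μ s), h1, measure_univ, tsub_self]

lemma avg_tendsto {α : Type*} [MeasurableSpace α] {U : Type*} [MetricSpace U]
    [MeasurableSpace U] [BorelSpace U]
    (ξm ξ₀ : ProbabilityMeasure α) {Φ : α → α}
    (herg : Ergodic Φ (ξm : Measure α)) (habs : (ξ₀ : Measure α) ≪ (ξm : Measure α))
    {h : α → U} (hhm : Measurable h) (hit : ∀ t, Measurable (Φ^[t])) :
    Tendsto (fun T => avgPM (fun t => pushPM h hhm (pushPM (Φ^[t]) (hit t) ξ₀)) T)
      atTop (𝓝 (pushPM h hhm ξm)) := by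
  rw [ProbabilityMeasure.tendsto_iff_forall_integral_tendsto]
  intro F
  have hFC : ∀ u : U, |F u| ≤ ‖F‖ := fun u => by
    rw [← Real.norm_eq_abs]; exact F.norm_coe_le_norm u
  have hFm : Measurable (fun x => F (h x)) := F.continuous.measurable.comp hhm
  have hint : ∀ t : ℕ, ∫ u, F u ∂((pushPM h hhm (pushPM (Φ^[t]) (hit t) ξ₀)) : Measure U)
      = ∫ x, F (h (Φ^[t] x)) ∂(ξ₀ : Measure α) := by
    intro t
    show ∫ u, F u ∂(((ξ₀ : Measure α).map (Φ^[t])).map h) = _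
    rw [integral_map hhm.aemeasurable (F.continuous.measurable.aestronglyMeasurable),
      integral_map (hit t).aemeasurable (hFm.aestronglyMeasurable)]
  have hlim : ∫ u, F u ∂((pushPM h hhm ξm) : Measure U)
      = ∫ x, F (h x) ∂(ξm : Measure α) := by
    show ∫ u, F u ∂((ξm : Measure α).map h) = _
    rw [integral_map hhm.aemeasurable (F.continuous.measurable.aestronglyMeasurable)]
  have havg : ∀ T : ℕ,
      ∫ u, F u ∂((avgPM (fun t => pushPM h hhm (pushPM (Φ^[t]) (hit t) ξ₀)) T) : Measure U)
      = ((T + 1 : ℕ) : ℝ)⁻¹ * ∑ t ∈ Finset.range (T + 1), ∫ x, F (h (Φ^[t] x)) ∂(ξ₀ : Measure α) := by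
    intro T
    show ∫ u, F u ∂(((T + 1 : ℕ) : ℝ≥0∞)⁻¹ •
      ∑ t ∈ Finset.range (T + 1), ((pushPM h hhm (pushPM (Φ^[t]) (hit t) ξ₀)) : Measure U)) = _
    rw [integral_smul_measure, integral_finset_sum_measure (fun t _ => F.integrable _)]
    simp only [hint, smul_eq_mul]
    congr 1
    rw [ENNReal.toReal_inv, ENNReal.toReal_natCast]
  simp only [havg, hlim]
  have hkey := keyCesaro (ξm : Measure α) (ξ₀ : Measure α) herg habs hFm (fun x => hFC (h x))
  have := hkey.comp (tendsto_add_atTop_nat 1)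
  exact this.congr (fun T => by simp [Function.comp])

/-- Cesàro density-forecast bound in the observation space for an ergodic
measure `ξ` of the state-space dynamics `Φ`, with conjugate proxy dynamics `Φ̂` and readouts
`h, ĥ`. -/
theorem statement9 {E : Type*} [NormedAddCommGroup E] [NormedSpace ℝ E]
    {H : Type*} [TopologicalSpace H] (I : ModelWithCorners ℝ E H)
    {Xt : Type*} [MetricSpace Xt] [CompactSpace Xt] [ChartedSpace H Xt]
    [IsManifold I (⊤ : ℕ∞) Xt] [MeasurableSpace Xt] [BorelSpace Xt]
    {U : Type*} [MetricSpace U] [TopologicalSpace.SeparableSpace U]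
    [MeasurableSpace U] [BorelSpace U]
    -- `Φ, Φ̂ ∈ Diff¹(X̃)`, conjugate by the homeomorphism `g`:
    (Φ Φh g : Xt ≃ₜ Xt)
    (hΦ : ContMDiff I I 1 ⇑Φ) (hΦinv : ContMDiff I I 1 ⇑Φ.symm)
    (hΦh : ContMDiff I I 1 ⇑Φh) (hΦhinv : ContMDiff I I 1 ⇑Φh.symm)
    (hconj : ∀ x, g (Φ x) = Φh (g x))
    -- continuous readouts:
    (h hh : Xt → U) (hhc : Continuous h) (hhhc : Continuous hh)
    -- `dPU` is a metric on `P(U)` metrizing the weak topology: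
    (dPU : ProbabilityMeasure U → ProbabilityMeasure U → ℝ)
    (hdP_symm : ∀ a b, dPU a b = dPU b a)
    (hdP_tri : ∀ a b c, dPU a c ≤ dPU a b + dPU b c)
    (hdP_eq : ∀ a b, dPU a b = 0 ↔ a = b)
    (hdP_top : ∀ s : Set (ProbabilityMeasure U),
      IsOpen s ↔ ∀ a ∈ s, ∃ ε > (0 : ℝ), ∀ b, dPU a b < ε → b ∈ s)
    -- `ξ` ergodic for `Φ`, `ξ₀ ≪ ξ`, `g⁻¹` nonsingular w.r.t. `ξ`:
    (ξ ξ₀ : ProbabilityMeasure Xt)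
    (herg : IsErgodicM ⇑Φ (ξ : Measure Xt))
    (habs : (ξ₀ : Measure Xt) ≪ (ξ : Measure Xt))
    (hns : (ξ : Measure Xt).map ⇑g.symm ≪ (ξ : Measure Xt)) :
    Filter.limsup
      (fun T : ℕ => dPU
        (avgPM (fun t => pushPM h hhc.measurable
          (pushPM (⇑Φ)^[t] (Φ.continuous.measurable.iterate t) ξ₀)) T)
        (avgPM (fun t => pushPM hh hhhc.measurable
          (pushPM (⇑Φh)^[t] (Φh.continuous.measurable.iterate t) ξ₀)) T))
      atTop
      ≤ dPU (pushPM h hhc.measurable ξ) (pushPM hh hhhc.measurable ξ) +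
        dPU (pushPM hh hhhc.measurable ξ)
          (pushPM hh hhhc.measurable (pushPM ⇑g g.continuous.measurable ξ)) := by
  have hgm : Measurable ⇑g := g.continuous.measurable
  have hΦm : Measurable ⇑Φ := Φ.continuous.measurable
  have hΦhm : Measurable ⇑Φh := Φh.continuous.measurable
  -- ergodicity of `Φ` w.r.t. `ξ`
  have hergΦ : Ergodic ⇑Φ (ξ : Measure Xt) := isErgodicM_ergodic hΦm herg
  -- the conjugated measure and its ergodicity for `Φh`
  have hergM : IsErgodicM ⇑Φh ((pushPM ⇑g hgm ξ : ProbabilityMeasure Xt) : Measure Xt) := by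
    constructor
    · show ((ξ : Measure Xt).map ⇑g).map ⇑Φh = (ξ : Measure Xt).map ⇑g
      rw [Measure.map_map hΦhm hgm]
      have hcomp : ⇑Φh ∘ ⇑g = ⇑g ∘ ⇑Φ := funext fun x => (hconj x).symm
      rw [hcomp, ← Measure.map_map hgm hΦm, herg.1]
    · intro A hA hinv
      have hB : MeasurableSet (⇑g ⁻¹' A) := hgm hA
      have hBinv : ⇑Φ ⁻¹' (⇑g ⁻¹' A) = ⇑g ⁻¹' A := by
        ext x
        simp only [Set.mem_preimage]
        rw [hconj x, ← Set.mem_preimage, hinv]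
      have hres := herg.2 (⇑g ⁻¹' A) hB hBinv
      show ((ξ : Measure Xt).map ⇑g) A = 0 ∨ ((ξ : Measure Xt).map ⇑g) A = 1
      rw [Measure.map_apply hgm hA]
      exact hres
  have hergΦh : Ergodic ⇑Φh ((pushPM ⇑g hgm ξ : ProbabilityMeasure Xt) : Measure Xt) :=
    isErgodicM_ergodic hΦhm hergM
  -- `ξ₀ ≪ g_* ξ`
  have hxi_g : (ξ : Measure Xt) ≪ ((pushPM ⇑g hgm ξ : ProbabilityMeasure Xt) : Measure Xt) := by
    refine Measure.AbsolutelyContinuous.mk fun s hs h0 => ?_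
    have h0' : (ξ : Measure Xt) (⇑g ⁻¹' s) = 0 := by
      rwa [show ((pushPM ⇑g hgm ξ : ProbabilityMeasure Xt) : Measure Xt)
        = (ξ : Measure Xt).map ⇑g from rfl, Measure.map_apply hgm hs] at h0
    have h2 : ((ξ : Measure Xt).map ⇑g.symm) (⇑g ⁻¹' s) = 0 := hns h0'
    rw [Measure.map_apply g.symm.continuous.measurable (hgm hs)] at h2
    have hset : ⇑g.symm ⁻¹' (⇑g ⁻¹' s) = s := by ext x; simp
    rwa [hset] at h2
  have habs' : (ξ₀ : Measure Xt) ≪ ((pushPM ⇑g hgm ξ : ProbabilityMeasure Xt) : Measure Xt) :=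
    habs.trans hxi_g
  -- convergence of the two Cesàro sequences
  have hta : Tendsto (fun T => avgPM (fun t => pushPM h hhc.measurable
      (pushPM (⇑Φ)^[t] (Φ.continuous.measurable.iterate t) ξ₀)) T) atTop
      (𝓝 (pushPM h hhc.measurable ξ)) :=
    avg_tendsto ξ ξ₀ hergΦ habs hhc.measurable (fun t => hΦm.iterate t)
  have htb : Tendsto (fun T => avgPM (fun t => pushPM hh hhhc.measurable
      (pushPM (⇑Φh)^[t] (Φh.continuous.measurable.iterate t) ξ₀)) T) atTop
      (𝓝 (pushPM hh hhhc.measurable (pushPM ⇑g g.continuous.measurable ξ))) :=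
    avg_tendsto (pushPM ⇑g hgm ξ) ξ₀ hergΦh habs' hhhc.measurable (fun t => hΦhm.iterate t)
  -- metric facts about dPU
  have hd_nonneg : ∀ a b, 0 ≤ dPU a b := by
    intro a b
    have h0 : dPU a a = 0 := (hdP_eq a a).mpr rfl
    have h1 := hdP_tri a b a
    have h2 := hdP_symm b a
    linarith
  have hd0 : ∀ (c : ProbabilityMeasure U) (s : ℕ → ProbabilityMeasure U),
      Tendsto s atTop (𝓝 c) → Tendsto (fun T => dPU c (s T)) atTop (𝓝 0) := by
    intro c s hs
    rw [tendsto_order]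
    constructor
    · intro x hx
      exact Eventually.of_forall fun T => lt_of_lt_of_le hx (hd_nonneg c (s T))
    · intro ε hε
      have hopen : IsOpen {b | dPU c b < ε} := by
        rw [hdP_top]
        intro a ha
        refine ⟨ε - dPU c a, by simpa using ha, fun b hb => ?_⟩
        have := hdP_tri c a b
        simp only [Set.mem_setOf_eq] at ha ⊢
        linarith
      have hmem : c ∈ {b | dPU c b < ε} := by
        simpa [Set.mem_setOf_eq, (hdP_eq c c).mpr rfl] using hε
      exact hs.eventually (hopen.mem_nhds hmem)
  set a := pushPM h hhc.measurable ξ with hadef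
  set b := pushPM hh hhhc.measurable (pushPM ⇑g g.continuous.measurable ξ) with hbdef
  have h1 := hd0 a _ hta
  have h2 := hd0 b _ htb
  have hTend : Tendsto (fun T : ℕ => dPU
      (avgPM (fun t => pushPM h hhc.measurable
        (pushPM (⇑Φ)^[t] (Φ.continuous.measurable.iterate t) ξ₀)) T)
      (avgPM (fun t => pushPM hh hhhc.measurable
        (pushPM (⇑Φh)^[t] (Φh.continuous.measurable.iterate t) ξ₀)) T)) atTop
      (𝓝 (dPU a b)) := by
    have hlow : Tendsto (fun T : ℕ => dPU a b - (dPU a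
        (avgPM (fun t => pushPM h hhc.measurable
          (pushPM (⇑Φ)^[t] (Φ.continuous.measurable.iterate t) ξ₀)) T)
        + dPU b (avgPM (fun t => pushPM hh hhhc.measurable
          (pushPM (⇑Φh)^[t] (Φh.continuous.measurable.iterate t) ξ₀)) T))) atTop
        (𝓝 (dPU a b)) := by
      have hc : Tendsto (fun _ : ℕ => dPU a b) atTop (𝓝 (dPU a b)) := tendsto_const_nhds
      have := hc.sub (h1.add h2)
      simpa using this
    have hup : Tendsto (fun T : ℕ => dPU a
        (avgPM (fun t => pushPM h hhc.measurable
          (pushPM (⇑Φ)^[t] (Φ.continuous.measurable.iterate t) ξ₀)) T)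
        + dPU a b
        + dPU b (avgPM (fun t => pushPM hh hhhc.measurable
          (pushPM (⇑Φh)^[t] (Φh.continuous.measurable.iterate t) ξ₀)) T)) atTop
        (𝓝 (dPU a b)) := by
      have hc : Tendsto (fun _ : ℕ => dPU a b) atTop (𝓝 (dPU a b)) := tendsto_const_nhds
      have := (h1.add hc).add h2
      simpa using this
    refine tendsto_of_tendsto_of_tendsto_of_le_of_le hlow hup ?_ ?_
    · intro T
      dsimp only
      set aT := avgPM (fun t => pushPM h hhc.measurable
        (pushPM (⇑Φ)^[t] (Φ.continuous.measurable.iterate t) ξ₀)) T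
      set bT := avgPM (fun t => pushPM hh hhhc.measurable
        (pushPM (⇑Φh)^[t] (Φh.continuous.measurable.iterate t) ξ₀)) T
      have t1 := hdP_tri a aT b
      have t2 := hdP_tri aT bT b
      have t3 := hdP_symm bT b
      linarith
    · intro T
      dsimp only
      set aT := avgPM (fun t => pushPM h hhc.measurable
        (pushPM (⇑Φ)^[t] (Φ.continuous.measurable.iterate t) ξ₀)) T
      set bT := avgPM (fun t => pushPM hh hhhc.measurable
        (pushPM (⇑Φh)^[t] (Φh.continuous.measurable.iterate t) ξ₀)) T
      have t1 := hdP_tri aT a bT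
      have t2 := hdP_tri a b bT
      have t3 := hdP_symm aT a
      have t4 := hdP_symm b bT
      linarith
  rw [hTend.limsup_eq]
  exact hdP_tri a (pushPM hh hhhc.measurable ξ) b

end
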